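/- Let H_X ≤ G be a subspace, let σ₀ ⊆ Fin n be a set of indices such that the cosets {e_i + H_X | i ∈ σ₀} of the standard basis vectors e_i form a basis of the quotient G/H_X, and for a ∈ G let wt_{σ₀}(a + H_X) denote the number of nonzero coefficients of a + H_X in this basis. Then: (i) for every a ∈ G, min{wt(a + h) | h ∈ H_X} ≤ wt_{σ₀}(a + H_X); and (ii) for every subspace H_Z ≤ G with H_X ≠ H_X + H_Z^θ, the minimum Hamming weight over (H_X + H_Z^θ) \ H_X is at most the minimum of wt_{σ₀} over the nonzero cosets in (H_X + H_Z^θ)/H_X. -/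

import Mathlib

open Finset

/-- Orthogonal complement of a submodule with respect to a bilinear form:
`ortho ξ H = {v | ξ(v,h) = 0 for all h ∈ H}`. -/
def ortho {K V : Type*} [CommSemiring K] [AddCommMonoid V] [Module K V]
    (ξ : V →ₗ[K] V →ₗ[K] K) (H : Submodule K V) : Submodule K V :=
  ⨅ h ∈ H, LinearMap.ker (ξ.flip h)

/-- The dot product `θ(a,b) = ∑ j, a j * b j` as a bilinear form on `Fin n → ZMod p`. -/
def dotB (p n : ℕ) : (Fin n → ZMod p) →ₗ[ZMod p] (Fin n → ZMod p) →ₗ[ZMod p] ZMod p :=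
  LinearMap.mk₂ (ZMod p) (fun a b => ∑ j, a j * b j)
    (fun a a' b => by simp [add_mul, Finset.sum_add_distrib])
    (fun c a b => by simp [Finset.mul_sum, mul_assoc])
    (fun a b b' => by simp [mul_add, Finset.sum_add_distrib])
    (fun c a b => by simp [Finset.mul_sum, mul_left_comm])

/-- The symmetric form on `V × V` induced by a bilinear form `B` on `V`:
`(v,w) ↦ B v.1 w.1 + B v.2 w.2`. -/
def sumB {K V : Type*} [CommRing K] [AddCommGroup V] [Module K V]
    (B : V →ₗ[K] V →ₗ[K] K) : (V × V) →ₗ[K] (V × V) →ₗ[K] K :=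
  LinearMap.mk₂ K (fun v w => B v.1 w.1 + B v.2 w.2)
    (fun v v' w => by simp; ring)
    (fun c v w => by simp; ring)
    (fun v w w' => by simp; ring)
    (fun c v w => by simp; ring)

/-- The symplectic form on `V × V` induced by a symmetric bilinear form `B` on `V`:
`(v,w) ↦ B v.2 w.1 - B v.1 w.2`. -/
def sympB {K V : Type*} [CommRing K] [AddCommGroup V] [Module K V]
    (B : V →ₗ[K] V →ₗ[K] K) : (V × V) →ₗ[K] (V × V) →ₗ[K] K :=
  LinearMap.mk₂ K (fun v w => B v.2 w.1 - B v.1 w.2)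
    (fun v v' w => by simp; ring)
    (fun c v w => by simp; ring)
    (fun v w w' => by simp; ring)
    (fun c v w => by simp; ring)

/-- Hamming weight of a vector in `Fin n → ZMod p`. -/
def hwt {p n : ℕ} (a : Fin n → ZMod p) : ℕ :=
  (Finset.univ.filter fun j => a j ≠ 0).card

/-- let `σ₀ ⊆ Fin n` be such that the cosets of the standard basis vectors
`e_i + H_X` (`i ∈ σ₀`) form a basis `B` of `G/H_X`, and let `wt_{σ₀}(a + H_X)` be the number
of nonzero coefficients of `a + H_X` in this basis. Then: (i) for every `a`,
`min {wt(a + h) | h ∈ H_X} ≤ wt_{σ₀}(a + H_X)`; (ii) for every `H_Z` with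
`H_X ≠ H_X + H_Z^θ`, the minimum weight over `(H_X + H_Z^θ) \ H_X` is at most the minimum
of `wt_{σ₀}` over the nonzero cosets of `(H_X + H_Z^θ)/H_X`. -/

lemma key_hwt {p n : ℕ} (σ₀ : Finset (Fin n)) (c : σ₀ →₀ ZMod p) :
    hwt (∑ i : σ₀, c i • (Pi.single (i : Fin n) (1 : ZMod p) : Fin n → ZMod p)) ≤ c.support.card := by
  classical
  have h1 : (Finset.univ.filter fun j =>
      (∑ i : σ₀, c i • (Pi.single (i : Fin n) (1 : ZMod p) : Fin n → ZMod p)) j ≠ 0)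
      ⊆ Finset.image Subtype.val c.support := by
    intro j hj
    simp only [Finset.mem_filter, Finset.mem_univ, true_and] at hj
    by_contra hjim
    apply hj
    rw [Finset.sum_apply]
    apply Finset.sum_eq_zero
    intro i _
    simp only [Pi.smul_apply, smul_eq_mul]
    by_cases hc : c i = 0
    · simp [hc]
    · have : (i : Fin n) ≠ j := by
        intro h
        exact hjim (Finset.mem_image.mpr ⟨i, Finsupp.mem_support_iff.mpr hc, h⟩)
      rw [Pi.single_apply, if_neg (fun h => this h.symm), mul_zero]
  exact le_trans (Finset.card_le_card h1) Finset.card_image_le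

lemma key_mk {p n : ℕ} [Fact p.Prime]
    (HX : Submodule (ZMod p) (Fin n → ZMod p)) (σ₀ : Finset (Fin n))
    (B : Module.Basis σ₀ (ZMod p) ((Fin n → ZMod p) ⧸ HX))
    (hB : ∀ i : σ₀, B i = Submodule.Quotient.mk ((Pi.single (i : Fin n) (1 : ZMod p) : Fin n → ZMod p)))
    (a : Fin n → ZMod p) :
    Submodule.Quotient.mk (p := HX)
      (∑ i : σ₀, (B.repr (Submodule.Quotient.mk a)) i • (Pi.single (i : Fin n) (1 : ZMod p) : Fin n → ZMod p))
      = Submodule.Quotient.mk a := by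
  conv_rhs => rw [← B.sum_repr (Submodule.Quotient.mk (p := HX) a)]
  simp only [hB, ← Submodule.mkQ_apply, map_sum, map_smul]

theorem stmt17 (p n : ℕ) [Fact p.Prime]
    (HX : Submodule (ZMod p) (Fin n → ZMod p))
    (σ₀ : Finset (Fin n))
    (B : Module.Basis σ₀ (ZMod p) ((Fin n → ZMod p) ⧸ HX))
    (hB : ∀ i : σ₀, B i = Submodule.Quotient.mk (Pi.single (i : Fin n) (1 : ZMod p))) :
    (∀ a : Fin n → ZMod p,
      sInf {w | ∃ h ∈ HX, hwt (a + h) = w}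
        ≤ (B.repr (Submodule.Quotient.mk a)).support.card) ∧
    (∀ HZ : Submodule (ZMod p) (Fin n → ZMod p),
      HX ≠ HX ⊔ ortho (dotB p n) HZ →
      sInf {w | ∃ a, a ∈ HX ⊔ ortho (dotB p n) HZ ∧ a ∉ HX ∧ hwt a = w}
        ≤ sInf {w | ∃ a, a ∈ HX ⊔ ortho (dotB p n) HZ ∧ a ∉ HX ∧
            (B.repr (Submodule.Quotient.mk a)).support.card = w}) := by

  classical
  have main : ∀ a : Fin n → ZMod p, ∃ a' : Fin n → ZMod p,
      a' - a ∈ HX ∧ hwt a' ≤ (B.repr (Submodule.Quotient.mk a)).support.card := by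
    intro a
    refine ⟨∑ i : σ₀, (B.repr (Submodule.Quotient.mk a)) i • (Pi.single (i : Fin n) (1 : ZMod p) : Fin n → ZMod p),
      ?_, key_hwt σ₀ _⟩
    exact (Submodule.Quotient.eq HX).mp (key_mk HX σ₀ B hB a)
  constructor
  · intro a
    obtain ⟨a', hmem, hle⟩ := main a
    have he : a + (a' - a) = a' := by ring
    have : hwt a' ∈ {w | ∃ h ∈ HX, hwt (a + h) = w} := ⟨a' - a, hmem, by rw [he]⟩
    exact (Nat.sInf_le this).trans hle
  · intro HZ hne
    set K := HX ⊔ ortho (dotB p n) HZ with hK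
    have hlt : HX < K := lt_of_le_of_ne le_sup_left hne
    obtain ⟨a0, ha0K, ha0X⟩ := SetLike.exists_of_lt hlt
    have hne2 : {w | ∃ a, a ∈ K ∧ a ∉ HX ∧
        (B.repr (Submodule.Quotient.mk a)).support.card = w}.Nonempty :=
      ⟨_, a0, ha0K, ha0X, rfl⟩
    obtain ⟨a, haK, haX, hcard⟩ := Nat.sInf_mem hne2
    obtain ⟨a', hmem, hle⟩ := main a
    have ha'K : a' ∈ K := by
      have : a' = a + (a' - a) := by ring
      rw [this]
      exact K.add_mem haK (le_sup_left (a := HX) hmem)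
    have ha'X : a' ∉ HX := by
      intro h
      apply haX
      have : a = a' - (a' - a) := by ring
      rw [this]
      exact HX.sub_mem h hmem
    have : hwt a' ∈ {w | ∃ a, a ∈ K ∧ a ∉ HX ∧ hwt a = w} := ⟨a', ha'K, ha'X, rfl⟩
    exact (Nat.sInf_le this).trans (hle.trans (le_of_eq hcard))
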